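/- arXiv:1310.8461 — 2 statements merged into one kernel-verified Lean document; each statement's English description precedes it below -/
import Mathlib

section
/- Let A be a nonnegative tensor of order m and dimension n, and suppose j₁ → j₂ → ⋯ → j_t is a walk in M(A), i.e., M(A)_{j_{k+1} j_k} > 0 for all 1 ≤ k ≤ t−1, with t > 1. Then M(A^{t−1})_{j_t j₁} > 0. -/
open Finset

/- An order-`m` dimension-`n` nonnegative tensor is encoded as
`A : Fin n → (Fin (m-1) → Fin n) → ℝ`, with `A i t = a_{i t₁ ⋯ t_{m-1}}`. -/

/-- The majorization matrix `M(A)_{ij} = a_{ij⋯j}`. -/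
def maj (n m : ℕ) (A : Fin n → (Fin (m-1) → Fin n) → ℝ) :
    Matrix (Fin n) (Fin n) ℝ :=
  fun i j => A i (fun _ => j)

/-- The majorization matrices of the Shao-product powers of `A`:
`majPow n m A k = M(A^k)`, via the recursion
`M(A^{k+1})_{uj} = Σ_{j₂,…,j_m} a_{u j₂ ⋯ j_m} M(A^k)_{j₂ j} ⋯ M(A^k)_{j_m j}`
(with `M(A^0)` the identity, so that `majPow n m A 1 = maj n m A`). -/
def majPow (n m : ℕ) (A : Fin n → (Fin (m-1) → Fin n) → ℝ) :
    ℕ → Matrix (Fin n) (Fin n) ℝ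
  | 0 => 1
  | k + 1 => fun u j =>
      ∑ t : Fin (m-1) → Fin n, A u t * ∏ i, majPow n m A k (t i) j

/-- `A` is primitive: `M(A^r) > 0` entrywise for some positive `r`. -/
def Primitive (n m : ℕ) (A : Fin n → (Fin (m-1) → Fin n) → ℝ) : Prop :=
  ∃ r, 0 < r ∧ ∀ u j, 0 < majPow n m A r u j


lemma majPow_nonneg (n m : ℕ) (A : Fin n → (Fin (m-1) → Fin n) → ℝ)
    (hA : ∀ u t, 0 ≤ A u t) : ∀ k u j₀, 0 ≤ majPow n m A k u j₀ := by
  intro k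
  induction k with
  | zero =>
      intro u j₀
      simp only [majPow, Matrix.one_apply]
      split <;> norm_num
  | succ k ih =>
      intro u j₀
      simp only [majPow]
      apply Finset.sum_nonneg
      intro t _
      exact mul_nonneg (hA u t) (Finset.prod_nonneg fun i _ => ih (t i) j₀)

lemma walk_pos (n m : ℕ) (A : Fin n → (Fin (m-1) → Fin n) → ℝ)
    (hA : ∀ u t, 0 ≤ A u t) (j : ℕ → Fin n) :
    ∀ s : ℕ, (∀ k : ℕ, k < s → 0 < maj n m A (j (k + 1)) (j k)) →
      0 < majPow n m A s (j s) (j 0) := by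
  intro s
  induction s with
  | zero => intro _; simp [majPow, Matrix.one_apply]
  | succ s ih =>
      intro hw
      have hih : 0 < majPow n m A s (j s) (j 0) :=
        ih fun k hk => hw k (Nat.lt_succ_of_lt hk)
      simp only [majPow]
      apply Finset.sum_pos' (fun t _ =>
        mul_nonneg (hA _ t)
          (Finset.prod_nonneg fun i _ => majPow_nonneg n m A hA s (t i) (j 0)))
      refine ⟨fun _ => j s, Finset.mem_univ _, ?_⟩
      exact mul_pos (hw s (Nat.lt_succ_self s)) (Finset.prod_pos fun i _ => hih)

/-- a walk of length `t-1` in `M(A)` yields `M(A^{t-1})_{j_t j₁} > 0`. -/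
theorem stmt_9 (n m : ℕ) (hm : 2 ≤ m)
    (A : Fin n → (Fin (m-1) → Fin n) → ℝ) (hA : ∀ u t, 0 ≤ A u t)
    (t : ℕ) (ht : 1 < t) (j : ℕ → Fin n)
    (hwalk : ∀ k : ℕ, k < t - 1 → 0 < maj n m A (j (k + 1)) (j k)) :
    0 < majPow n m A (t - 1) (j (t - 1)) (j 0) := by
  exact walk_pos n m A hA j (t-1) hwalk
end

section
/- Let A be a nonnegative tensor of order m and dimension n such that a_{i i₂ ⋯ i_m} = 0 whenever i₂,…,i_m are not all equal, and suppose M(A) is a primitive matrix. Then A is a primitive tensor and γ(A) = γ(M(A)), where γ denotes the primitive degree (smallest r with M(A^r) > 0, resp. smallest r with (M(A))^r > 0). -/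
open Finset

lemma pow_entry_nonneg {n : ℕ} (M : Matrix (Fin n) (Fin n) ℝ)
    (hM : ∀ i j, 0 ≤ M i j) : ∀ k i j, 0 ≤ (M ^ k) i j := by
  intro k
  induction k with
  | zero => intro i j; simp [Matrix.one_apply]; positivity
  | succ k ih =>
    intro i j
    rw [pow_succ', Matrix.mul_apply]
    exact Finset.sum_nonneg fun c _ => mul_nonneg (hM i c) (ih c j)

lemma key (n m : ℕ) (hm : 2 ≤ m)
    (A : Fin n → (Fin (m-1) → Fin n) → ℝ) (hA : ∀ u t, 0 ≤ A u t)
    (hdiag : ∀ (i : Fin n) (t : Fin (m-1) → Fin n),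
      (¬ ∀ k k' : Fin (m-1), t k = t k') → A i t = 0) :
    ∀ k, (∀ u j, 0 ≤ majPow n m A k u j) ∧
      (∀ u j, 0 < majPow n m A k u j ↔ 0 < ((maj n m A) ^ k) u j) := by
  have hm1 : 0 < m - 1 := by omega
  have i0 : Fin (m-1) := ⟨0, hm1⟩
  have hM : ∀ i j, 0 ≤ maj n m A i j := fun i j => hA _ _
  intro k
  induction k with
  | zero =>
    constructor <;> intro u j <;> simp [majPow, Matrix.one_apply]
    positivity
  | succ k ih =>
    obtain ⟨ihnn, ihpos⟩ := ih
    have hterm : ∀ u j (t : Fin (m-1) → Fin n),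
        0 ≤ A u t * ∏ i, majPow n m A k (t i) j :=
      fun u j t => mul_nonneg (hA u t) (Finset.prod_nonneg fun i _ => ihnn _ _)
    refine ⟨fun u j => Finset.sum_nonneg fun t _ => hterm u j t, fun u j => ?_⟩
    constructor
    · intro h
      have : ∑ t : Fin (m-1) → Fin n, (0:ℝ)
          < ∑ t : Fin (m-1) → Fin n, A u t * ∏ i, majPow n m A k (t i) j := by
        simpa [majPow] using h
      obtain ⟨t, _, ht⟩ := Finset.exists_lt_of_sum_lt this
      have hAt : A u t ≠ 0 := by
        intro h0; rw [h0, zero_mul] at ht; exact lt_irrefl _ ht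
      have hconst : ∀ k' k'' : Fin (m-1), t k' = t k'' := by
        by_contra hc
        exact hAt (hdiag u t hc)
      set c := t i0 with hc
      have htc : t = fun _ => c := funext fun i => hconst i i0
      rw [htc] at ht
      have hMuc : 0 < maj n m A u c := by
        rcases lt_or_eq_of_le (hA u (fun _ => c)) with h' | h'
        · exact h'
        · rw [maj]; rw [← h', zero_mul] at ht; exact absurd ht (lt_irrefl _)
      have hprod : 0 < majPow n m A k c j := by
        rcases lt_or_eq_of_le (ihnn c j) with h' | h'
        · exact h'
        · exfalso
          have : (∏ _i : Fin (m-1), majPow n m A k c j) = 0 :=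
            Finset.prod_eq_zero (Finset.mem_univ i0) h'.symm
          rw [this, mul_zero] at ht; exact lt_irrefl _ ht
      have hMk : 0 < ((maj n m A) ^ k) c j := (ihpos c j).mp hprod
      rw [pow_succ']
      refine Finset.sum_pos' (fun c' _ => mul_nonneg (hM u c')
        (pow_entry_nonneg _ hM k c' j)) ⟨c, Finset.mem_univ c, mul_pos hMuc hMk⟩
    · intro h
      rw [pow_succ'] at h
      have : ∑ c : Fin n, (0:ℝ)
          < ∑ c : Fin n, maj n m A u c * ((maj n m A) ^ k) c j := by
        simpa [Matrix.mul_apply] using h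
      obtain ⟨c, _, hc⟩ := Finset.exists_lt_of_sum_lt this
      have hMuc : 0 < maj n m A u c := by
        rcases lt_or_eq_of_le (hM u c) with h' | h'
        · exact h'
        · rw [← h', zero_mul] at hc; exact absurd hc (lt_irrefl _)
      have hMk : 0 < ((maj n m A) ^ k) c j := by
        rcases lt_or_eq_of_le (pow_entry_nonneg _ hM k c j) with h' | h'
        · exact h'
        · rw [← h', mul_zero] at hc; exact absurd hc (lt_irrefl _)
      have hmp : 0 < majPow n m A k c j := (ihpos c j).mpr hMk
      show 0 < ∑ t : Fin (m-1) → Fin n, A u t * ∏ i, majPow n m A k (t i) j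
      refine Finset.sum_pos' (fun t _ => hterm u j t)
        ⟨fun _ => c, Finset.mem_univ _, mul_pos hMuc (Finset.prod_pos fun i _ => hmp)⟩

/-- for a tensor supported on equal trailing indices with
primitive majorization matrix, `A` is primitive and `γ(A) = γ(M(A))`. -/
theorem stmt_15 (n m : ℕ) (hm : 2 ≤ m)
    (A : Fin n → (Fin (m-1) → Fin n) → ℝ) (hA : ∀ u t, 0 ≤ A u t)
    (hdiag : ∀ (i : Fin n) (t : Fin (m-1) → Fin n),
      (¬ ∀ k k' : Fin (m-1), t k = t k') → A i t = 0)
    (hMprim : ∃ r, 0 < r ∧ ∀ i j : Fin n, 0 < ((maj n m A) ^ r) i j) :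
    Primitive n m A ∧
      sInf {r : ℕ | 0 < r ∧ ∀ u j : Fin n, 0 < majPow n m A r u j}
        = sInf {r : ℕ | 0 < r ∧ ∀ i j : Fin n, 0 < ((maj n m A) ^ r) i j} := by
  have hk := key n m hm A hA hdiag
  have hsets : {r : ℕ | 0 < r ∧ ∀ u j : Fin n, 0 < majPow n m A r u j}
      = {r : ℕ | 0 < r ∧ ∀ i j : Fin n, 0 < ((maj n m A) ^ r) i j} := by
    ext r
    simp only [Set.mem_setOf_eq]
    constructor
    · rintro ⟨hr, h⟩; exact ⟨hr, fun i j => ((hk r).2 i j).mp (h i j)⟩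
    · rintro ⟨hr, h⟩; exact ⟨hr, fun u j => ((hk r).2 u j).mpr (h u j)⟩
  obtain ⟨r, hr, hpos⟩ := hMprim
  exact ⟨⟨r, hr, fun u j => ((hk r).2 u j).mpr (hpos u j)⟩, by rw [hsets]⟩
end
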